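/- There exist a set Ω and uncertain variables X, Y with joint range ⟦X,Y⟧ = {(x₁,y₁),(x₂,y₁),(x₃,y₂)} (x₁,x₂,x₃ distinct, y₁,y₂ distinct) such that L⋆(X → Y) = log₂ 3 while L⋆(Y → X) = log₂ 2; hence maximal non-stochastic brute-force leakage is not symmetric. -/

import Mathlib

open Set

/-- Conditional range ⟦X | Y = y⟧ = {X ω : Y ω = y}. -/
def crange {Ω 𝕏 𝕐 : Type*} (X : Ω → 𝕏) (Y : Ω → 𝕐) (y : 𝕐) : Set 𝕏 :=
  {x | ∃ ω, Y ω = y ∧ X ω = x}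

/-- min_{y ∈ ⟦Y⟧} |⟦X | Y = y⟧|. -/
noncomputable def minCond {Ω 𝕏 𝕐 : Type*} (X : Ω → 𝕏) (Y : Ω → 𝕐) : ℕ :=
  sInf ((fun y => (crange X Y y).ncard) '' Set.range Y)

/-- Non-stochastic brute-force guessing leakage
L(X → Y) = log₂(|⟦X⟧| / min_{y ∈ ⟦Y⟧} |⟦X|Y=y⟧|). -/
noncomputable def leak {Ω 𝕏 𝕐 : Type*} (X : Ω → 𝕏) (Y : Ω → 𝕐) : ℝ :=
  Real.logb 2 (((Set.range X).ncard : ℝ) / (minCond X Y : ℝ))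

/-- Maximal non-stochastic brute-force leakage (closed formula)
L⋆(X → Y) = log₂(|⟦X⟧| − min_{y∈⟦Y⟧}|⟦X|Y=y⟧| + 1). -/
noncomputable def maxLeak {Ω 𝕏 𝕐 : Type*} (X : Ω → 𝕏) (Y : Ω → 𝕐) : ℝ :=
  Real.logb 2 (((Set.range X).ncard : ℝ) - (minCond X Y : ℝ) + 1)

def Xv : Fin 3 → Fin 3 := id
def Yv : Fin 3 → Fin 2 := ![0, 0, 1]

lemma rX : Set.range Xv = (Set.univ : Set (Fin 3)) := Set.range_eq_univ.mpr (fun x => ⟨x, rfl⟩)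

lemma rY : Set.range Yv = (Set.univ : Set (Fin 2)) := by
  apply Set.range_eq_univ.mpr
  intro y
  fin_cases y
  · exact ⟨0, rfl⟩
  · exact ⟨2, rfl⟩

lemma cXY1 : crange Xv Yv 1 = {2} := by
  ext x; constructor
  · rintro ⟨ω, h1, rfl⟩; fin_cases ω <;> simp_all [Yv, Xv]
  · rintro rfl; exact ⟨2, rfl, rfl⟩

lemma cYX (x : Fin 3) : crange Yv Xv x = {Yv x} := by
  ext y; constructor
  · rintro ⟨ω, h1, rfl⟩; simp only [Xv, id] at h1; subst h1; rfl
  · rintro rfl; exact ⟨x, rfl, rfl⟩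

lemma minXY : minCond Xv Yv = 1 := by
  apply le_antisymm
  · apply Nat.sInf_le
    exact ⟨1, ⟨2, rfl⟩, by show (crange Xv Yv 1).ncard = 1; rw [cXY1]; exact Set.ncard_singleton _⟩
  · apply le_csInf ((Set.range_nonempty Yv).image _)
    rintro b ⟨y, ⟨ω, hω⟩, rfl⟩
    have : (crange Xv Yv y).Nonempty := ⟨Xv ω, ω, hω, rfl⟩
    exact (Set.ncard_pos (Set.toFinite _)).mpr this

lemma minYX : minCond Yv Xv = 1 := by
  have h : ∀ x : Fin 3, (crange Yv Xv x).ncard = 1 := fun x => by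
    rw [cYX]; exact Set.ncard_singleton _
  apply le_antisymm
  · exact Nat.sInf_le ⟨0, ⟨0, rfl⟩, h 0⟩
  · apply le_csInf ((Set.range_nonempty Xv).image _)
    rintro b ⟨x, -, rfl⟩
    exact (h x).ge

lemma joint : Set.range (fun ω => (Xv ω, Yv ω)) =
    {((0 : Fin 3), (0 : Fin 2)), (1, 0), (2, 1)} := by
  ext ⟨a, b⟩
  constructor
  · rintro ⟨ω, h⟩; fin_cases ω <;> simp_all [Xv, Yv]
  · intro h
    simp only [Set.mem_insert_iff, Set.mem_singleton_iff, Prod.ext_iff] at h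
    rcases h with ⟨rfl, rfl⟩ | ⟨rfl, rfl⟩ | ⟨rfl, rfl⟩
    · exact ⟨0, rfl⟩
    · exact ⟨1, rfl⟩
    · exact ⟨2, rfl⟩

theorem stmt_12 :
    ∃ (Ω : Type) (X : Ω → Fin 3) (Y : Ω → Fin 2),
      Set.range (fun ω => (X ω, Y ω)) = {((0 : Fin 3), (0 : Fin 2)), (1, 0), (2, 1)} ∧
      maxLeak X Y = Real.logb 2 3 ∧ maxLeak Y X = Real.logb 2 2 := by
  refine ⟨Fin 3, Xv, Yv, joint, ?_, ?_⟩
  · rw [maxLeak, minXY, rX, Set.ncard_univ]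
    norm_num
  · rw [maxLeak, minYX, rY, Set.ncard_univ]
    norm_num
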